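/- arXiv:0709.1774 — 4 statements merged into one kernel-verified Lean document; each statement's English description precedes it below -/
import Mathlib

section
/- Let m ≥ 1, let W ⊆ ℝ^{m+1} be compact with interior W° and topological boundary ∂W := W ∖ W°, let E be a Hausdorff topological space, and let Y ⊆ ∂W × E be compact. Define Z̃ := closure in W × S^m × Y of the set {(v, x, (w,e)) ∈ W × S^m × Y : v ≠ w and x = (w − v)/|w − v|}, and Z₀ := Z̃ ∩ (∂W × S^m × Y). Then the projection (v, x, (w,e)) ↦ (v, (w,e)) restricts to a homeomorphism from Z̃ ∖ Z₀ onto W° × Y. -/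
/-- With `Z̃` the closure in `W × S^m × Y` of
`{(v,x,(w,e)) : v ≠ w, x = (w - v)/‖w - v‖}` and `Z₀ := Z̃ ∩ (∂W × S^m × Y)`,
the projection `(v,x,(w,e)) ↦ (v,(w,e))` restricts to a homeomorphism
`Z̃ ∖ Z₀ ≃ₜ W° × Y`. -/
theorem stmt3 (m : ℕ) (hm : 1 ≤ m)
    (E : Type*) [TopologicalSpace E] [T2Space E]
    (W : Set (EuclideanSpace ℝ (Fin (m + 1))))
    (hWcpt : IsCompact W)
    (Y : Set (EuclideanSpace ℝ (Fin (m + 1)) × E))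
    (hYcpt : IsCompact Y)
    (hYsub : Y ⊆ (W \ interior W) ×ˢ (Set.univ : Set E))
    (S₁ Ztil Z₀ : Set (EuclideanSpace ℝ (Fin (m + 1)) ×
      EuclideanSpace ℝ (Fin (m + 1)) × (EuclideanSpace ℝ (Fin (m + 1)) × E)))
    (hS₁ : S₁ = {p | p.1 ∈ W ∧
      p.2.1 ∈ Metric.sphere (0 : EuclideanSpace ℝ (Fin (m + 1))) 1 ∧
      p.2.2 ∈ Y ∧ p.1 ≠ p.2.2.1 ∧
      p.2.1 = ‖p.2.2.1 - p.1‖⁻¹ • (p.2.2.1 - p.1)})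
    (hZtil : Ztil = closure S₁ ∩
      {p | p.1 ∈ W ∧ p.2.1 ∈ Metric.sphere (0 : EuclideanSpace ℝ (Fin (m + 1))) 1 ∧
        p.2.2 ∈ Y})
    (hZ₀ : Z₀ = Ztil ∩ {p | p.1 ∈ W \ interior W}) :
    ∃ h : ↥(Ztil \ Z₀) ≃ₜ ↥((interior W) ×ˢ Y),
      ∀ p : ↥(Ztil \ Z₀),
        (h p : EuclideanSpace ℝ (Fin (m + 1)) × (EuclideanSpace ℝ (Fin (m + 1)) × E)) =
          ((p : EuclideanSpace ℝ (Fin (m + 1)) ×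
            EuclideanSpace ℝ (Fin (m + 1)) × (EuclideanSpace ℝ (Fin (m + 1)) × E)).1,
           (p : EuclideanSpace ℝ (Fin (m + 1)) ×
            EuclideanSpace ℝ (Fin (m + 1)) × (EuclideanSpace ℝ (Fin (m + 1)) × E)).2.2) := by
  classical
  -- continuity of the two auxiliary maps
  have hcont1 : Continuous (fun p : EuclideanSpace ℝ (Fin (m + 1)) × EuclideanSpace ℝ (Fin (m + 1)) × (EuclideanSpace ℝ (Fin (m + 1)) × E) => ‖p.2.2.1 - p.1‖ • p.2.1) := by
    fun_prop
  have hcont2 : Continuous (fun p : EuclideanSpace ℝ (Fin (m + 1)) × EuclideanSpace ℝ (Fin (m + 1)) × (EuclideanSpace ℝ (Fin (m + 1)) × E) => p.2.2.1 - p.1) := by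
    fun_prop
  have heq : Set.EqOn (fun p : EuclideanSpace ℝ (Fin (m + 1)) × EuclideanSpace ℝ (Fin (m + 1)) × (EuclideanSpace ℝ (Fin (m + 1)) × E) => ‖p.2.2.1 - p.1‖ • p.2.1)
      (fun p : EuclideanSpace ℝ (Fin (m + 1)) × EuclideanSpace ℝ (Fin (m + 1)) × (EuclideanSpace ℝ (Fin (m + 1)) × E) => p.2.2.1 - p.1) S₁ := by
    intro p hp
    rw [hS₁] at hp
    obtain ⟨-, -, -, hne, hx⟩ := hp
    have hnz : ‖p.2.2.1 - p.1‖ ≠ 0 := by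
      simpa [sub_eq_zero] using fun h => hne h.symm
    simp only [hx, smul_inv_smul₀ hnz]
  have hclosure := heq.closure hcont1 hcont2
  -- key structural facts about points of Ztil \ Z₀
  have key : ∀ p ∈ Ztil \ Z₀, p.1 ∈ interior W ∧ p.2.2 ∈ Y ∧
      p.2.1 = ‖p.2.2.1 - p.1‖⁻¹ • (p.2.2.1 - p.1) := by
    intro p hp
    obtain ⟨hpZ, hpZ₀⟩ := hp
    have hpZ' := hpZ
    rw [hZtil] at hpZ'
    obtain ⟨hpcl, hW, hsph, hY⟩ := hpZ'
    have hint : p.1 ∈ interior W := by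
      by_contra hint
      exact hpZ₀ (by rw [hZ₀]; exact ⟨hpZ, ⟨hW, hint⟩⟩)
    have hw : p.2.2.1 ∈ W \ interior W := (hYsub hY).1
    have hne : p.1 ≠ p.2.2.1 := fun h => hw.2 (h ▸ hint)
    have hnz : ‖p.2.2.1 - p.1‖ ≠ 0 := by
      simpa [sub_eq_zero] using fun h => hne h.symm
    refine ⟨hint, hY, ?_⟩
    have h2 : ‖p.2.2.1 - p.1‖ • p.2.1 = p.2.2.1 - p.1 := hclosure hpcl
    calc p.2.1 = ‖p.2.2.1 - p.1‖⁻¹ • (‖p.2.2.1 - p.1‖ • p.2.1) := (inv_smul_smul₀ hnz _).symm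
      _ = ‖p.2.2.1 - p.1‖⁻¹ • (p.2.2.1 - p.1) := by rw [h2]
  -- the inverse map lands in Ztil \ Z₀
  have mem_inv : ∀ q ∈ (interior W) ×ˢ Y,
      ((q.1, (‖q.2.1 - q.1‖⁻¹ • (q.2.1 - q.1), q.2)) : EuclideanSpace ℝ (Fin (m + 1)) × EuclideanSpace ℝ (Fin (m + 1)) × (EuclideanSpace ℝ (Fin (m + 1)) × E)) ∈ Ztil \ Z₀ := by
    intro q hq
    obtain ⟨hq1, hq2⟩ := hq
    have hw : q.2.1 ∈ W \ interior W := (hYsub hq2).1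
    have hne : q.1 ≠ q.2.1 := fun h => hw.2 (h ▸ hq1)
    have hnz : ‖q.2.1 - q.1‖ ≠ 0 := by
      simpa [sub_eq_zero] using fun h => hne h.symm
    have hsph : ‖q.2.1 - q.1‖⁻¹ • (q.2.1 - q.1) ∈
        Metric.sphere (0 : EuclideanSpace ℝ (Fin (m + 1))) 1 := by
      simp only [Metric.mem_sphere, dist_zero_right, norm_smul, norm_inv, norm_norm]
      exact inv_mul_cancel₀ hnz
    have hmem : ((q.1, (‖q.2.1 - q.1‖⁻¹ • (q.2.1 - q.1), q.2)) : EuclideanSpace ℝ (Fin (m + 1)) × EuclideanSpace ℝ (Fin (m + 1)) × (EuclideanSpace ℝ (Fin (m + 1)) × E)) ∈ S₁ := by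
      rw [hS₁]
      exact ⟨interior_subset hq1, hsph, hq2, hne, rfl⟩
    constructor
    · rw [hZtil]
      exact ⟨subset_closure hmem, interior_subset hq1, hsph, hq2⟩
    · rw [hZ₀]
      rintro ⟨-, -, habs⟩
      exact habs hq1
  -- forward map
  have fwd_mem : ∀ p : ↥(Ztil \ Z₀), ((p : EuclideanSpace ℝ (Fin (m + 1)) × EuclideanSpace ℝ (Fin (m + 1)) × (EuclideanSpace ℝ (Fin (m + 1)) × E)).1, (p : EuclideanSpace ℝ (Fin (m + 1)) × EuclideanSpace ℝ (Fin (m + 1)) × (EuclideanSpace ℝ (Fin (m + 1)) × E)).2.2)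
      ∈ (interior W) ×ˢ Y := fun p =>
    ⟨(key p p.2).1, (key p p.2).2.1⟩
  refine ⟨{ toFun := fun p => ⟨((p : EuclideanSpace ℝ (Fin (m + 1)) × EuclideanSpace ℝ (Fin (m + 1)) × (EuclideanSpace ℝ (Fin (m + 1)) × E)).1, (p : EuclideanSpace ℝ (Fin (m + 1)) × EuclideanSpace ℝ (Fin (m + 1)) × (EuclideanSpace ℝ (Fin (m + 1)) × E)).2.2), fwd_mem p⟩
            invFun := fun q => ⟨((q : EuclideanSpace ℝ (Fin (m + 1)) × EuclideanSpace ℝ (Fin (m + 1)) × E).1,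
              (‖(q : EuclideanSpace ℝ (Fin (m + 1)) × EuclideanSpace ℝ (Fin (m + 1)) × E).2.1 - (q : EuclideanSpace ℝ (Fin (m + 1)) × EuclideanSpace ℝ (Fin (m + 1)) × E).1‖⁻¹ •
                ((q : EuclideanSpace ℝ (Fin (m + 1)) × EuclideanSpace ℝ (Fin (m + 1)) × E).2.1 - (q : EuclideanSpace ℝ (Fin (m + 1)) × EuclideanSpace ℝ (Fin (m + 1)) × E).1), (q : EuclideanSpace ℝ (Fin (m + 1)) × EuclideanSpace ℝ (Fin (m + 1)) × E).2)), mem_inv q q.2⟩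
            left_inv := ?_
            right_inv := ?_
            continuous_toFun := ?_
            continuous_invFun := ?_ }, fun p => rfl⟩
  · intro p
    obtain ⟨hint, hY, hx⟩ := key p p.2
    apply Subtype.ext
    exact Prod.ext rfl (Prod.ext hx.symm rfl)
  · intro q
    apply Subtype.ext
    rfl
  · apply Continuous.subtype_mk
    fun_prop
  · apply Continuous.subtype_mk
    refine (continuous_subtype_val.fst).prodMk (Continuous.prodMk ?_ ?_)
    · apply Continuous.fun_smul
      · apply Continuous.inv₀
        · fun_prop
        · intro q
          have hw : (q : EuclideanSpace ℝ (Fin (m + 1)) × EuclideanSpace ℝ (Fin (m + 1)) × E).2.1 ∈ W \ interior W := (hYsub q.2.2).1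
          have hne : (q : EuclideanSpace ℝ (Fin (m + 1)) × EuclideanSpace ℝ (Fin (m + 1)) × E).1 ≠ (q : EuclideanSpace ℝ (Fin (m + 1)) × EuclideanSpace ℝ (Fin (m + 1)) × E).2.1 :=
            fun h => hw.2 (h ▸ q.2.1)
          simpa [sub_eq_zero] using fun h => hne h.symm
      · fun_prop
    · fun_prop
end

section
/- Let m ≥ 1, let W ⊆ ℝ^{m+1} be compact with interior W° and topological boundary ∂W := W ∖ W°, and let D ⊆ W° be a compact set. Define V := closure in W × S^m × ∂W of the set {(v, x, w) ∈ W × S^m × ∂W : v ≠ w and x = (w − v)/|w − v|}, and let p : V → W × ∂W be the projection (v,x,w) ↦ (v,w). Then the restriction of p to p^{-1}(D × ∂W) is a homeomorphism onto D × ∂W. -/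
/-- With `V` the closure in `W × S^m × ∂W` of
`{(v,x,w) : v ≠ w, x = (w - v)/‖w - v‖}`, `p : V → W × ∂W` the projection
`(v,x,w) ↦ (v,w)`, and `D ⊆ W°` compact, the restriction of `p` to
`p⁻¹(D × ∂W)` is a homeomorphism onto `D × ∂W`. -/
theorem stmt5 (m : ℕ) (hm : 1 ≤ m)
    (W : Set (EuclideanSpace ℝ (Fin (m + 1))))
    (hWcpt : IsCompact W)
    (D : Set (EuclideanSpace ℝ (Fin (m + 1))))
    (hDcpt : IsCompact D) (hD : D ⊆ interior W)
    (S₁ V : Set (EuclideanSpace ℝ (Fin (m + 1)) ×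
      EuclideanSpace ℝ (Fin (m + 1)) × EuclideanSpace ℝ (Fin (m + 1))))
    (hS₁ : S₁ = {p | p.1 ∈ W ∧
      p.2.1 ∈ Metric.sphere (0 : EuclideanSpace ℝ (Fin (m + 1))) 1 ∧
      p.2.2 ∈ W \ interior W ∧ p.1 ≠ p.2.2 ∧
      p.2.1 = ‖p.2.2 - p.1‖⁻¹ • (p.2.2 - p.1)})
    (hV : V = closure S₁ ∩
      {p | p.1 ∈ W ∧ p.2.1 ∈ Metric.sphere (0 : EuclideanSpace ℝ (Fin (m + 1))) 1 ∧
        p.2.2 ∈ W \ interior W}) :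
    ∃ h : ↥(V ∩ {p | (p.1, p.2.2) ∈ D ×ˢ (W \ interior W)}) ≃ₜ
        ↥(D ×ˢ (W \ interior W)),
      ∀ p : ↥(V ∩ {p | (p.1, p.2.2) ∈ D ×ˢ (W \ interior W)}),
        (h p : EuclideanSpace ℝ (Fin (m + 1)) × EuclideanSpace ℝ (Fin (m + 1))) =
          ((p : EuclideanSpace ℝ (Fin (m + 1)) ×
            EuclideanSpace ℝ (Fin (m + 1)) × EuclideanSpace ℝ (Fin (m + 1))).1,
           (p : EuclideanSpace ℝ (Fin (m + 1)) ×
            EuclideanSpace ℝ (Fin (m + 1)) × EuclideanSpace ℝ (Fin (m + 1))).2.2) := by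
  subst hS₁ hV
  set f : (EuclideanSpace ℝ (Fin (m + 1))) × (EuclideanSpace ℝ (Fin (m + 1))) → (EuclideanSpace ℝ (Fin (m + 1))) := fun q => ‖q.2 - q.1‖⁻¹ • (q.2 - q.1) with hf
  have hsep : ∀ v ∈ D, ∀ w ∈ W \ interior W, v ≠ w := by
    intro v hv w hw h; exact hw.2 (h ▸ hD hv)
  have hfa : ∀ (v w : (EuclideanSpace ℝ (Fin (m + 1)))), v ≠ w → ContinuousAt f (v, w) := by
    intro v w hvw
    have h1 : ContinuousAt (fun q : (EuclideanSpace ℝ (Fin (m + 1))) × (EuclideanSpace ℝ (Fin (m + 1))) => q.2 - q.1) (v, w) :=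
      (continuous_snd.sub continuous_fst).continuousAt
    have h2 : ContinuousAt (fun q : (EuclideanSpace ℝ (Fin (m + 1))) × (EuclideanSpace ℝ (Fin (m + 1))) => ‖q.2 - q.1‖⁻¹) (v, w) :=
      h1.norm.inv₀ (by simp [sub_eq_zero, hvw.symm])
    exact h2.smul h1
  set S : Set ((EuclideanSpace ℝ (Fin (m + 1))) × (EuclideanSpace ℝ (Fin (m + 1))) × (EuclideanSpace ℝ (Fin (m + 1)))) := {p | p.1 ∈ W ∧
      p.2.1 ∈ Metric.sphere (0 : (EuclideanSpace ℝ (Fin (m + 1)))) 1 ∧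
      p.2.2 ∈ W \ interior W ∧ p.1 ≠ p.2.2 ∧
      p.2.1 = ‖p.2.2 - p.1‖⁻¹ • (p.2.2 - p.1)} with hS
  have key : ∀ p : (EuclideanSpace ℝ (Fin (m + 1))) × (EuclideanSpace ℝ (Fin (m + 1))) × (EuclideanSpace ℝ (Fin (m + 1))), p ∈ closure S → p.1 ≠ p.2.2 →
      p.2.1 = f (p.1, p.2.2) := by
    intro p hp hne
    obtain ⟨u, hu, hlim⟩ := mem_closure_iff_seq_limit.1 hp
    have h1 : Filter.Tendsto (fun n => (u n).2.1) Filter.atTop (nhds p.2.1) :=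
      ((continuous_fst.comp continuous_snd).tendsto p).comp hlim
    have h2 : Filter.Tendsto (fun n => ((u n).1, (u n).2.2)) Filter.atTop
        (nhds (p.1, p.2.2)) :=
      ((continuous_fst.prodMk (continuous_snd.comp continuous_snd)).tendsto p).comp hlim
    have h3 : Filter.Tendsto (fun n => f ((u n).1, (u n).2.2)) Filter.atTop
        (nhds (f (p.1, p.2.2))) := (hfa _ _ hne).tendsto.comp h2
    have heq : ∀ n, (u n).2.1 = f ((u n).1, (u n).2.2) := fun n => (hu n).2.2.2.2
    exact tendsto_nhds_unique (h1.congr heq) h3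
  have hnorm : ∀ v w : (EuclideanSpace ℝ (Fin (m + 1))), v ≠ w → f (v, w) ∈ Metric.sphere (0 : (EuclideanSpace ℝ (Fin (m + 1)))) 1 := by
    intro v w hvw
    have h0 : w - v ≠ 0 := sub_ne_zero.2 hvw.symm
    simp [hf, norm_smul, norm_inv, inv_mul_cancel₀ (norm_ne_zero_iff.2 h0)]
  have hmemA : ∀ q : (EuclideanSpace ℝ (Fin (m + 1))) × (EuclideanSpace ℝ (Fin (m + 1))), q ∈ D ×ˢ (W \ interior W) →
      (q.1, f q, q.2) ∈ (closure S ∩ {p : (EuclideanSpace ℝ (Fin (m + 1))) × (EuclideanSpace ℝ (Fin (m + 1))) × (EuclideanSpace ℝ (Fin (m + 1))) | p.1 ∈ W ∧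
        p.2.1 ∈ Metric.sphere (0 : (EuclideanSpace ℝ (Fin (m + 1)))) 1 ∧ p.2.2 ∈ W \ interior W}) ∩
        {p : (EuclideanSpace ℝ (Fin (m + 1))) × (EuclideanSpace ℝ (Fin (m + 1))) × (EuclideanSpace ℝ (Fin (m + 1))) | (p.1, p.2.2) ∈ D ×ˢ (W \ interior W)} := by
    intro q hq
    have hne := hsep q.1 hq.1 q.2 hq.2
    refine ⟨⟨subset_closure ?_, interior_subset (hD hq.1), hnorm _ _ hne, hq.2⟩, hq⟩
    exact ⟨interior_subset (hD hq.1), hnorm _ _ hne, hq.2, hne, rfl⟩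
  refine ⟨⟨⟨fun p => ⟨(p.1.1, p.1.2.2), p.2.2⟩,
      fun q => ⟨(q.1.1, f q.1, q.1.2), hmemA q.1 q.2⟩, ?_, ?_⟩, ?_, ?_⟩, fun p => rfl⟩
  · rintro ⟨p, hpV, hpD⟩
    have hne := hsep p.1 hpD.1 p.2.2 hpD.2
    have hkey := key p hpV.1 hne
    apply Subtype.ext
    exact Prod.ext rfl (Prod.ext hkey.symm rfl)
  · rintro ⟨q, hq⟩; rfl
  · exact Continuous.subtype_mk
      ((continuous_fst.comp continuous_subtype_val).prodMk
        ((continuous_snd.comp (continuous_snd.comp continuous_subtype_val)))) _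
  · apply Continuous.subtype_mk
    rw [continuous_iff_continuousAt]
    intro q
    have hne := hsep q.1.1 q.2.1 q.1.2 q.2.2
    have hg : ContinuousAt (fun r : ↥(D ×ˢ (W \ interior W)) => (r : (EuclideanSpace ℝ (Fin (m + 1))) × (EuclideanSpace ℝ (Fin (m + 1))))) q :=
      continuous_subtype_val.continuousAt
    have hfc : ContinuousAt (fun r : ↥(D ×ˢ (W \ interior W)) => f r) q :=
      ContinuousAt.comp (g := f) (show ContinuousAt f ((q : (EuclideanSpace ℝ (Fin (m + 1))) × (EuclideanSpace ℝ (Fin (m + 1))))) from hfa q.1.1 q.1.2 hne) hg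
    exact hg.fst.prodMk (hfc.prodMk hg.snd)
end

section
/- Let m ≥ 1 and let W and E be compact Hausdorff topological spaces. Let τ be the coordinate-switching involution on (W × S^m × E) × (W × S^m × E) and q the quotient map onto ((W × S^m × E) × (W × S^m × E))/τ. Define the anti-diagonal A := q({((w,x,e), (w,−x,e)) : w ∈ W, x ∈ S^m, e ∈ E}), equipped with the subspace topology. Then A is homeomorphic to W × (S^m/∼) × E, where S^m/∼ is the quotient of S^m by the antipodal identification x ∼ −x (i.e. real projective m-space); moreover the homeomorphism can be chosen to commute with the natural projections of both spaces to W × E. -/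
/-- The relation on `Z × Z` identifying a pair with its coordinate swap;
quotienting by it gives the symmetric square `(Z × Z)/τ`. -/
def swapRel (Z : Type*) : Z × Z → Z × Z → Prop :=
  fun p q => q = p ∨ q = Prod.swap p

lemma swapRel_equivalence (Z : Type*) : Equivalence (swapRel Z) := by
  constructor
  · intro p; exact Or.inl rfl
  · rintro p q (rfl | rfl)
    · exact Or.inl rfl
    · exact Or.inr (Prod.swap_swap p).symm
  · rintro p q r (rfl | rfl) (rfl | rfl)
    · exact Or.inl rfl
    · exact Or.inr rfl
    · exact Or.inr rfl
    · rw [Prod.swap_swap]; exact Or.inl rfl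

lemma swapRel_mk_eq {Z : Type*} {p q : Z × Z} :
    Quot.mk (swapRel Z) p = Quot.mk (swapRel Z) q ↔ (q = p ∨ q = Prod.swap p) := by
  rw [Quot.eq, (swapRel_equivalence Z).eqvGen_iff]; rfl

lemma t2_quot_swapRel (Z : Type*) [TopologicalSpace Z] [T2Space Z] :
    T2Space (Quot (swapRel Z)) := by
  constructor
  intro a b hab
  obtain ⟨p, rfl⟩ := Quot.exists_rep a
  obtain ⟨q, rfl⟩ := Quot.exists_rep b
  have hrel : ¬ (q = p ∨ q = Prod.swap p) := fun h => hab (swapRel_mk_eq.mpr h)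
  push_neg at hrel
  obtain ⟨h1, h2⟩ := hrel
  have h3 : p ≠ q := fun h => h1 h.symm
  have h4 : p ≠ Prod.swap q := by
    intro h; exact h2 (by rw [h, Prod.swap_swap])
  have h5 : Prod.swap p ≠ q := fun h => h2 h.symm
  have h6 : Prod.swap p ≠ Prod.swap q := by
    intro h; exact h3 (by simpa using congrArg Prod.swap h)
  obtain ⟨U1, V1, hU1, hV1, hpU1, hqV1, hd1⟩ := t2_separation h3
  obtain ⟨U2, V2, hU2, hV2, hpU2, hqV2, hd2⟩ := t2_separation h4
  obtain ⟨U3, V3, hU3, hV3, hpU3, hqV3, hd3⟩ := t2_separation h5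
  obtain ⟨U4, V4, hU4, hV4, hpU4, hqV4, hd4⟩ := t2_separation h6
  have hσc : Continuous (Prod.swap : Z × Z → Z × Z) := continuous_swap
  set Ut : Set (Z × Z) := (U1 ∩ U2) ∩ Prod.swap ⁻¹' (U3 ∩ U4) with hUt
  set Vt : Set (Z × Z) := (V1 ∩ V3) ∩ Prod.swap ⁻¹' (V2 ∩ V4) with hVt
  set U : Set (Z × Z) := Ut ∪ Prod.swap ⁻¹' Ut with hU
  set V : Set (Z × Z) := Vt ∪ Prod.swap ⁻¹' Vt with hV
  have hUto : IsOpen Ut := (hU1.inter hU2).inter ((hU3.inter hU4).preimage hσc)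
  have hVto : IsOpen Vt := (hV1.inter hV3).inter ((hV2.inter hV4).preimage hσc)
  have hUo : IsOpen U := hUto.union (hUto.preimage hσc)
  have hVo : IsOpen V := hVto.union (hVto.preimage hσc)
  have hpU : p ∈ U := Or.inl ⟨⟨hpU1, hpU2⟩, ⟨hpU3, hpU4⟩⟩
  have hqV : q ∈ V := Or.inl ⟨⟨hqV1, hqV3⟩, ⟨hqV2, hqV4⟩⟩
  have hUVdisj : ∀ z, z ∈ U → z ∈ V → False := by
    rintro z (hz | hz) (hz' | hz')
    · exact Set.disjoint_left.mp hd1 hz.1.1 hz'.1.1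
    · exact Set.disjoint_left.mp hd2 hz.1.2 hz'.2.1
    · exact Set.disjoint_left.mp hd3 hz.2.1 hz'.1.2
    · exact Set.disjoint_left.mp hd4 hz.2.2 hz'.2.2
  have hUinv : ∀ z, z ∈ U → Prod.swap z ∈ U := by
    rintro z (hz | hz)
    · exact Or.inr (by simpa [Set.mem_preimage, Prod.swap_swap] using hz)
    · exact Or.inl hz
  have hVinv : ∀ z, z ∈ V → Prod.swap z ∈ V := by
    rintro z (hz | hz)
    · exact Or.inr (by simpa [Set.mem_preimage, Prod.swap_swap] using hz)
    · exact Or.inl hz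
  refine ⟨Quot.mk _ '' U, Quot.mk _ '' V, ?_, ?_, ⟨p, hpU, rfl⟩, ⟨q, hqV, rfl⟩, ?_⟩
  · rw [← isQuotientMap_quot_mk.isOpen_preimage]
    have : Quot.mk (swapRel Z) ⁻¹' (Quot.mk (swapRel Z) '' U) = U := by
      ext z
      constructor
      · rintro ⟨u, hu, huz⟩
        rcases swapRel_mk_eq.mp huz with rfl | rfl
        · exact hu
        · exact hUinv u hu
      · intro hz; exact ⟨z, hz, rfl⟩
    rw [this]; exact hUo
  · rw [← isQuotientMap_quot_mk.isOpen_preimage]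
    have : Quot.mk (swapRel Z) ⁻¹' (Quot.mk (swapRel Z) '' V) = V := by
      ext z
      constructor
      · rintro ⟨u, hu, huz⟩
        rcases swapRel_mk_eq.mp huz with rfl | rfl
        · exact hu
        · exact hVinv u hu
      · intro hz; exact ⟨z, hz, rfl⟩
    rw [this]; exact hVo
  · rw [Set.disjoint_left]
    rintro z ⟨u, hu, rfl⟩ ⟨v, hv, hvu⟩
    rcases swapRel_mk_eq.mp hvu with h | h
    · exact hUVdisj u hu (by rw [h]; exact hv)
    · exact hUVdisj u hu (by
        have := hVinv v hv
        rwa [← h] at this)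

/-- The anti-diagonal `A = q({((w,x,e),(w,-x,e))})` inside
`((W × S^m × E) × (W × S^m × E))/τ` is homeomorphic to `W × (S^m/±) × E`
(with `S^m/±` real projective `m`-space), via a homeomorphism commuting with
the projections of both spaces to `W × E`. -/
theorem stmt7 (m : ℕ) (hm : 1 ≤ m)
    (W E : Type*) [TopologicalSpace W] [CompactSpace W] [T2Space W]
    [TopologicalSpace E] [CompactSpace E] [T2Space E]
    (A : Set (Quot (swapRel (W × EuclideanSpace ℝ (Fin (m + 1)) × E))))
    (hA : A = Quot.mk (swapRel (W × EuclideanSpace ℝ (Fin (m + 1)) × E)) ''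
      {p | ∃ (w : W) (x : EuclideanSpace ℝ (Fin (m + 1))) (e : E),
        x ∈ Metric.sphere (0 : EuclideanSpace ℝ (Fin (m + 1))) 1 ∧
        p = ((w, x, e), (w, -x, e))}) :
    ∃ h : ↥A ≃ₜ
        W × Quot (fun a b : ↥(Metric.sphere (0 : EuclideanSpace ℝ (Fin (m + 1))) 1) =>
          (b : EuclideanSpace ℝ (Fin (m + 1))) = (a : EuclideanSpace ℝ (Fin (m + 1))) ∨
          (b : EuclideanSpace ℝ (Fin (m + 1))) = -(a : EuclideanSpace ℝ (Fin (m + 1)))) × E,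
      ∀ (a : ↥A) (z₁ z₂ : W × EuclideanSpace ℝ (Fin (m + 1)) × E),
        Quot.mk (swapRel (W × EuclideanSpace ℝ (Fin (m + 1)) × E)) (z₁, z₂) = (a : _) →
          (h a).1 = z₁.1 ∧ (h a).2.2 = z₁.2.2 := by
  classical
  let V := EuclideanSpace ℝ (Fin (m + 1))
  let S := ↥(Metric.sphere (0 : V) 1)
  let srel : S → S → Prop := fun a b =>
    (b : V) = (a : V) ∨ (b : V) = -(a : V)
  let Z := W × V × E
  -- the "outer product" map, used to see that `Quot srel` is Hausdorff
  let sq : S → (Fin (m + 1) → Fin (m + 1) → ℝ) :=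
    fun x i j => (x : V) i * (x : V) j
  have sq_resp : ∀ a b : S, srel a b → sq a = sq b := by
    rintro a b (hab | hab)
    · funext i j; simp only [sq, hab]
    · funext i j
      show (a : V) i * (a : V) j = (b : V) i * (b : V) j
      rw [hab, PiLp.neg_apply, PiLp.neg_apply, neg_mul_neg]
  have sq_inj : ∀ a b : S, sq a = sq b → srel a b := by
    intro a b hab
    have ha : ‖(a : V)‖ = 1 := mem_sphere_zero_iff_norm.mp a.2
    obtain ⟨i, hi⟩ : ∃ i, (a : V) i ≠ 0 := by
      by_contra h
      push_neg at h
      have hz : (a : V) = 0 := by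
        ext j; simpa using h j
      rw [hz] at ha; simp at ha
    have habij : ∀ j k, (a : V) j * (a : V) k = (b : V) j * (b : V) k := fun j k =>
      congrFun (congrFun hab j) k
    rcases mul_self_eq_mul_self_iff.mp (habij i i) with hbi | hbi
    · left
      ext j
      have h1 := habij i j
      rw [← hbi] at h1
      exact (mul_left_cancel₀ hi h1).symm
    · right
      have hbi' : (b : V) i = -((a : V) i) := by rw [hbi, neg_neg]
      ext j
      have h1 := habij i j
      rw [hbi'] at h1
      have h2 : (a : V) i * (a : V) j = (a : V) i * -((b : V) j) := by
        rw [h1]; ring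
      have h3 := mul_left_cancel₀ hi h2
      show (b : V) j = (-(a : V)) j
      rw [PiLp.neg_apply]
      linarith
  have sq_cont : Continuous sq := by
    refine continuous_pi fun i => continuous_pi fun j => Continuous.mul ?_ ?_
    · exact ((EuclideanSpace.proj i).continuous).comp continuous_subtype_val
    · exact ((EuclideanSpace.proj j).continuous).comp continuous_subtype_val
  have lift_inj : Function.Injective (Quot.lift sq sq_resp) := by
    intro a b
    induction a using Quot.ind with | _ x => ?_
    induction b using Quot.ind with | _ y => ?_
    intro h
    exact Quot.sound (sq_inj x y h)
  have lift_cont : Continuous (Quot.lift sq sq_resp) := continuous_quot_lift _ sq_cont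
  haveI hT2Q : T2Space (Quot srel) := T2Space.of_injective_continuous lift_inj lift_cont
  haveI hT2A : T2Space (Quot (swapRel Z)) := t2_quot_swapRel Z
  haveI hCS : CompactSpace (Quot srel) := Quot.compactSpace
  -- the map from `W × S × E` to the anti-diagonal
  have gmem : ∀ p : W × S × E,
      Quot.mk (swapRel Z) ((p.1, (p.2.1 : V), p.2.2), (p.1, -(p.2.1 : V), p.2.2)) ∈ A := by
    intro p
    rw [hA]
    exact ⟨_, ⟨p.1, (p.2.1 : V), p.2.2, p.2.1.2, rfl⟩, rfl⟩
  let g : W × S × E → ↥A := fun p =>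
    ⟨Quot.mk (swapRel Z) ((p.1, (p.2.1 : V), p.2.2), (p.1, -(p.2.1 : V), p.2.2)), gmem p⟩
  have g_resp : ∀ (w : W) (e : E) (a b : S), srel a b → g (w, a, e) = g (w, b, e) := by
    rintro w e a b (hab | hab)
    · have : a = b := Subtype.ext hab.symm
      rw [this]
    · apply Subtype.ext
      show Quot.mk (swapRel Z) ((w, (a : V), e), (w, -(a : V), e)) =
        Quot.mk (swapRel Z) ((w, (b : V), e), (w, -(b : V), e))
      rw [hab, neg_neg]
      exact Quot.sound (Or.inr rfl)
  let gh : W × Quot srel × E → ↥A := fun p =>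
    Quot.liftOn p.2.1 (fun x => g (p.1, x, p.2.2)) (fun a b hab => g_resp p.1 p.2.2 a b hab)
  have gh_surj : Function.Surjective gh := by
    rintro ⟨aval, ha⟩
    rw [hA] at ha
    obtain ⟨p, ⟨w, x, e, hx, rfl⟩, hp⟩ := ha
    exact ⟨(w, Quot.mk srel ⟨x, hx⟩, e), Subtype.ext hp⟩
  have gh_inj : Function.Injective gh := by
    rintro ⟨w, qx, e⟩ ⟨w', qx', e'⟩ h
    induction qx using Quot.ind with | _ x => ?_
    induction qx' using Quot.ind with | _ x' => ?_
    have hval : Quot.mk (swapRel Z) ((w, (x : V), e), (w, -(x : V), e)) =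
        Quot.mk (swapRel Z) ((w', (x' : V), e'), (w', -(x' : V), e')) :=
      congrArg Subtype.val h
    rcases swapRel_mk_eq.mp hval with heq | heq
    · have h1 : ((w', (x' : V), e') : W × V × E) = (w, (x : V), e) := congrArg Prod.fst heq
      have hw : w' = w := congrArg Prod.fst h1
      have hx : (x' : V) = (x : V) := congrArg (fun t : W × V × E => t.2.1) h1
      have he : e' = e := congrArg (fun t : W × V × E => t.2.2) h1
      exact Prod.ext_iff.mpr ⟨hw.symm,
        Prod.ext_iff.mpr ⟨Quot.sound (Or.inl hx), he.symm⟩⟩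
    · have h1 : ((w', (x' : V), e') : W × V × E) = (w, -(x : V), e) := congrArg Prod.fst heq
      have hw : w' = w := congrArg Prod.fst h1
      have hx : (x' : V) = -(x : V) := congrArg (fun t : W × V × E => t.2.1) h1
      have he : e' = e := congrArg (fun t : W × V × E => t.2.2) h1
      exact Prod.ext_iff.mpr ⟨hw.symm,
        Prod.ext_iff.mpr ⟨Quot.sound (Or.inr hx), he.symm⟩⟩
  let eqv : (W × Quot srel × E) ≃ ↥A := Equiv.ofBijective gh ⟨gh_inj, gh_surj⟩
  have g_cont : Continuous g := by
    apply Continuous.subtype_mk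
    apply continuous_quot_mk.comp
    have hc : Continuous fun p : W × S × E => ((p.2.1 : V)) :=
      continuous_subtype_val.comp (continuous_fst.comp continuous_snd)
    exact (continuous_fst.prodMk (hc.prodMk (continuous_snd.comp continuous_snd))).prodMk
      (continuous_fst.prodMk (hc.neg.prodMk (continuous_snd.comp continuous_snd)))
  let G : W × S × E → W × Quot srel × E := fun p => (p.1, Quot.mk srel p.2.1, p.2.2)
  have G_cont : Continuous G :=
    continuous_fst.prodMk ((continuous_quot_mk.comp
      (continuous_fst.comp continuous_snd)).prodMk (continuous_snd.comp continuous_snd))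
  have G_surj : Function.Surjective G := by
    rintro ⟨w, qx, e⟩
    induction qx using Quot.ind with | _ x => ?_
    exact ⟨(w, x, e), rfl⟩
  have G_qm : Topology.IsQuotientMap G := (G_cont.isClosedMap).isQuotientMap G_cont G_surj
  have gh_cont : Continuous gh := by
    rw [G_qm.continuous_iff]
    exact g_cont
  have eqv_cont : Continuous eqv := gh_cont
  let homeo : (W × Quot srel × E) ≃ₜ ↥A :=
    Continuous.homeoOfEquivCompactToT2 (f := eqv) eqv_cont
  refine ⟨homeo.symm, ?_⟩
  intro a z₁ z₂ hz
  obtain ⟨p, rfl⟩ := eqv.surjective a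
  obtain ⟨w, qx, e⟩ := p
  induction qx using Quot.ind with | _ x => ?_
  have hsymm : homeo.symm (eqv (w, Quot.mk srel x, e)) = (w, Quot.mk srel x, e) :=
    homeo.symm_apply_apply _
  rw [hsymm]
  have hz' : Quot.mk (swapRel Z) (z₁, z₂) =
      Quot.mk (swapRel Z) ((w, (x : V), e), (w, -(x : V), e)) := hz
  rcases swapRel_mk_eq.mp hz' with heq | heq
  · have h1 : (w, (x : V), e) = z₁ := congrArg Prod.fst heq
    rw [← h1]
    exact ⟨rfl, rfl⟩
  · have h1 : (w, -(x : V), e) = z₁ := congrArg Prod.snd heq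
    rw [← h1]
    exact ⟨rfl, rfl⟩
end

section
/- Let Z be a topological space, τ the coordinate-switching involution on Z × Z, and q : Z × Z → (Z × Z)/τ the quotient map. For a compact pair (P,Q) in Z (i.e. Q ⊆ P ⊆ Z with P, Q compact), define P^s := q(P × P) and ∂^s(P,Q) := q(Δ_P ∪ (Q × P) ∪ (P × Q)), where Δ_P := {(p,p) : p ∈ P}. Say that a compact pair (Y,B) is admissible for a compact pair (X,A) if X ∩ (Y ∖ B) is contained in X ∖ A and is a relatively open subset of X ∖ A. If (Y,B) is admissible for (X,A), then the pair (Y^s, ∂^s(Y,B)) is admissible for the pair (X^s, ∂^s(X,A)); that is, X^s ∩ (Y^s ∖ ∂^s(Y,B)) is contained in X^s ∖ ∂^s(X,A) and is a relatively open subset of X^s ∖ ∂^s(X,A). -/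
/-- `P^s := q(P × P)`, the symmetric square of `P` in `(Z × Z)/τ`. -/
def symSq {Z : Type*} (P : Set Z) : Set (Quot (swapRel Z)) :=
  Quot.mk (swapRel Z) '' (P ×ˢ P)

/-- `∂^s(P,Q) := q(Δ_P ∪ (Q × P) ∪ (P × Q))`, the "boundary" part of the
symmetric square of the pair `(P,Q)`. -/
def symBd {Z : Type*} (P Q : Set Z) : Set (Quot (swapRel Z)) :=
  Quot.mk (swapRel Z) '' ({p : Z × Z | p.1 ∈ P ∧ p.1 = p.2} ∪ Q ×ˢ P ∪ P ×ˢ Q)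

/-- `(Y,B)` is admissible for `(X,A)`: `X ∩ (Y ∖ B)` is contained in `X ∖ A`
and is a relatively open subset of `X ∖ A`. -/
def Admissible {γ : Type*} [TopologicalSpace γ] (X A Y B : Set γ) : Prop :=
  X ∩ (Y \ B) ⊆ X \ A ∧ ∃ U : Set γ, IsOpen U ∧ X ∩ (Y \ B) = (X \ A) ∩ U

lemma swapRel_eqvGen {Z : Type*} {a b : Z × Z} (h : Relation.EqvGen (swapRel Z) a b) :
    b = a ∨ b = Prod.swap a := by
  induction h with
  | rel x y h => exact h
  | refl x => exact Or.inl rfl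
  | symm x y _ ih =>
      rcases ih with rfl | rfl
      · exact Or.inl rfl
      · exact Or.inr (by simp)
  | trans x y z _ _ ih1 ih2 =>
      rcases ih1 with rfl | rfl <;> rcases ih2 with rfl | rfl <;> simp

lemma preimage_image_swapInv {Z : Type*} {S : Set (Z × Z)}
    (hS : ∀ p ∈ S, Prod.swap p ∈ S) :
    Quot.mk (swapRel Z) ⁻¹' (Quot.mk (swapRel Z) '' S) = S := by
  ext p
  constructor
  · rintro ⟨s, hs, he⟩
    rcases swapRel_eqvGen (Quot.eq.mp he) with rfl | rfl
    · exact hs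
    · exact hS s hs
  · intro hp
    exact ⟨p, hp, rfl⟩

lemma mem_image_swapInv {Z : Type*} {S : Set (Z × Z)}
    (hS : ∀ p ∈ S, Prod.swap p ∈ S) (p : Z × Z) :
    Quot.mk (swapRel Z) p ∈ Quot.mk (swapRel Z) '' S ↔ p ∈ S := by
  rw [← Set.mem_preimage, preimage_image_swapInv hS]

lemma prod_swapInv {Z : Type*} (P : Set Z) :
    ∀ p ∈ (P ×ˢ P : Set (Z × Z)), Prod.swap p ∈ (P ×ˢ P : Set (Z × Z)) := by
  rintro ⟨a, b⟩ ⟨h1, h2⟩; exact ⟨h2, h1⟩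

lemma bd_swapInv {Z : Type*} (P Q : Set Z) :
    ∀ p ∈ ({p : Z × Z | p.1 ∈ P ∧ p.1 = p.2} ∪ Q ×ˢ P ∪ P ×ˢ Q),
      Prod.swap p ∈ ({p : Z × Z | p.1 ∈ P ∧ p.1 = p.2} ∪ Q ×ˢ P ∪ P ×ˢ Q) := by
  rintro ⟨a, b⟩ ((⟨h1, heq⟩ | ⟨h1, h2⟩) | ⟨h1, h2⟩)
  · cases heq; exact Or.inl (Or.inl ⟨h1, rfl⟩)
  · exact Or.inr ⟨h2, h1⟩
  · exact Or.inl (Or.inr ⟨h2, h1⟩)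

lemma mem_symSq {Z : Type*} (P : Set Z) (a b : Z) :
    Quot.mk (swapRel Z) (a, b) ∈ symSq P ↔ a ∈ P ∧ b ∈ P :=
  mem_image_swapInv (prod_swapInv P) (a, b)

lemma mem_symBd {Z : Type*} (P Q : Set Z) (a b : Z) :
    Quot.mk (swapRel Z) (a, b) ∈ symBd P Q ↔
      ((a ∈ P ∧ a = b) ∨ (a ∈ Q ∧ b ∈ P)) ∨ (a ∈ P ∧ b ∈ Q) := by
  rw [symBd, mem_image_swapInv (bd_swapInv P Q)]
  simp [Set.mem_union]

/-- If the compact pair `(Y,B)` is admissible for the compact pair `(X,A)` in `Z`,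
then `(Y^s, ∂^s(Y,B))` is admissible for `(X^s, ∂^s(X,A))` in `(Z × Z)/τ`. -/
theorem stmt9 (Z : Type*) [TopologicalSpace Z]
    (X A Y B : Set Z)
    (hAX : A ⊆ X) (hBY : B ⊆ Y)
    (hX : IsCompact X) (hA : IsCompact A) (hY : IsCompact Y) (hB : IsCompact B)
    (hadm : Admissible X A Y B) :
    Admissible (symSq X) (symBd X A) (symSq Y) (symBd Y B) := by
  obtain ⟨hsub, U, hU, hE⟩ := hadm
  have hsub' : ∀ t, t ∈ X → t ∈ Y → t ∉ B → t ∈ X ∧ t ∉ A := by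
    intro t h1 h2 h3
    have := hsub ⟨h1, h2, h3⟩
    exact ⟨this.1, this.2⟩
  have hE' : ∀ t, (t ∈ X ∧ t ∈ Y ∧ t ∉ B) ↔ ((t ∈ X ∧ t ∉ A) ∧ t ∈ U) := by
    intro t
    have := Set.ext_iff.mp hE t
    simpa using this
  constructor
  · intro z hz
    induction z using Quot.ind with
    | _ p =>
      obtain ⟨a, b⟩ := p
      simp only [Set.mem_inter_iff, Set.mem_diff, mem_symSq, mem_symBd] at hz ⊢
      obtain ⟨⟨haX, hbX⟩, ⟨haY, hbY⟩, hnb⟩ := hz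
      have hane : a ≠ b := fun h => hnb (Or.inl (Or.inl ⟨haY, h⟩))
      have haB : a ∉ B := fun h => hnb (Or.inl (Or.inr ⟨h, hbY⟩))
      have hbB : b ∉ B := fun h => hnb (Or.inr ⟨haY, h⟩)
      have ha := hsub' a haX haY haB
      have hb := hsub' b hbX hbY hbB
      refine ⟨⟨haX, hbX⟩, ?_⟩
      rintro ((⟨_, h⟩ | ⟨h, _⟩) | ⟨_, h⟩)
      · exact hane h
      · exact ha.2 h
      · exact hb.2 h
  · refine ⟨Quot.mk (swapRel Z) '' (U ×ˢ U), ?_, ?_⟩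
    · rw [← isQuotientMap_quot_mk.isOpen_preimage,
        preimage_image_swapInv (prod_swapInv U)]
      exact hU.prod hU
    · ext z
      induction z using Quot.ind with
      | _ p =>
        obtain ⟨a, b⟩ := p
        simp only [Set.mem_inter_iff, Set.mem_diff, mem_symSq, mem_symBd,
          mem_image_swapInv (prod_swapInv U)]
        have ha := hE' a
        have hb := hE' b
        constructor
        · rintro ⟨⟨haX, hbX⟩, ⟨haY, hbY⟩, hnb⟩
          have hane : a ≠ b := fun h => hnb (Or.inl (Or.inl ⟨haY, h⟩))
          have haB : a ∉ B := fun h => hnb (Or.inl (Or.inr ⟨h, hbY⟩))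
          have hbB : b ∉ B := fun h => hnb (Or.inr ⟨haY, h⟩)
          have ha' := ha.mp ⟨haX, haY, haB⟩
          have hb' := hb.mp ⟨hbX, hbY, hbB⟩
          refine ⟨⟨⟨haX, hbX⟩, ?_⟩, ha'.2, hb'.2⟩
          rintro ((⟨_, h⟩ | ⟨h, _⟩) | ⟨_, h⟩)
          · exact hane h
          · exact ha'.1.2 h
          · exact hb'.1.2 h
        · rintro ⟨⟨⟨haX, hbX⟩, hnb⟩, haU, hbU⟩
          have hane : a ≠ b := fun h => hnb (Or.inl (Or.inl ⟨haX, h⟩))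
          have haA : a ∉ A := fun h => hnb (Or.inl (Or.inr ⟨h, hbX⟩))
          have hbA : b ∉ A := fun h => hnb (Or.inr ⟨haX, h⟩)
          have ha' := ha.mpr ⟨⟨haX, haA⟩, haU⟩
          have hb' := hb.mpr ⟨⟨hbX, hbA⟩, hbU⟩
          refine ⟨⟨haX, hbX⟩, ⟨ha'.2.1, hb'.2.1⟩, ?_⟩
          rintro ((⟨_, h⟩ | ⟨h, _⟩) | ⟨_, h⟩)
          · exact hane h
          · exact ha'.2.2 h
          · exact hb'.2.2 h
end
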